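/- Let g be a left Leibniz algebra over ℝ (or over a field of characteristic zero, with g nilpotent so that exponentials are finite sums, or g finite-dimensional over ℝ so that exp converges). Define the operation X ▷ Y = exp(ad X)(Y), where ad(X)(Y) = [X,Y]. Then ▷ satisfies the self-distributivity law X ▷ (Y ▷ Z) = (X ▷ Y) ▷ (X ▷ Z). -/

import Mathlib

open NormedSpace

/-- `exp (ad X)` is an automorphism of the bracket, by a constancy-of-derivative argument. -/
theorem leibniz_exp_aut (L : Type*) [NormedAddCommGroup L]
    [NormedSpace ℝ L] [FiniteDimensional ℝ L]
    (br : L →ₗ[ℝ] L →ₗ[ℝ] L)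
    (hleib : ∀ a b c : L, br a (br b c) = br (br a b) c + br b (br a c))
    (X Y Z : L) :
    exp ((LinearMap.toContinuousLinearMap (br X) : L →L[ℝ] L)) (br Y Z) =
      br (exp ((LinearMap.toContinuousLinearMap (br X) : L →L[ℝ] L)) Y)
        (exp ((LinearMap.toContinuousLinearMap (br X) : L →L[ℝ] L)) Z) := by
  set A : L →L[ℝ] L := LinearMap.toContinuousLinearMap (br X) with hA
  -- the map `a ↦ ad a` as a continuous linear map
  let F : L →L[ℝ] (L →L[ℝ] L) := LinearMap.toContinuousLinearMap
    ((LinearMap.toContinuousLinearMap : (L →ₗ[ℝ] L) ≃ₗ[ℝ] (L →L[ℝ] L)).toLinearMap.comp br)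
  have hF : ∀ a b : L, F a b = br a b := fun a b => rfl
  have hAap : ∀ a : L, A a = br X a := fun a => rfl
  set u : ℝ → L := fun t => exp (t • A) Y with hu_def
  set v : ℝ → L := fun t => exp (t • A) Z with hv_def
  set w : ℝ → L := fun t => br (u t) (v t) with hw_def
  set h : ℝ → L := fun t => exp (t • (-A)) (w t) with hh_def
  have hu : ∀ t : ℝ, HasDerivAt u (A (u t)) t := by
    intro t
    have h1 : HasDerivAt (fun s : ℝ => exp (s • A)) (A * exp (t • A)) t :=
      hasDerivAt_exp_smul_const' A t
    have h2 := h1.clm_apply (hasDerivAt_const t Y)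
    simpa using h2
  have hv : ∀ t : ℝ, HasDerivAt v (A (v t)) t := by
    intro t
    have h1 : HasDerivAt (fun s : ℝ => exp (s • A)) (A * exp (t • A)) t :=
      hasDerivAt_exp_smul_const' A t
    have h2 := h1.clm_apply (hasDerivAt_const t Z)
    simpa using h2
  have hw : ∀ t : ℝ, HasDerivAt w (A (w t)) t := by
    intro t
    have hc : HasDerivAt (fun t => F (u t)) (F (A (u t))) t :=
      F.hasFDerivAt.comp_hasDerivAt t (hu t)
    have h2 := hc.clm_apply (hv t)
    have h3 : F (A (u t)) (v t) + F (u t) (A (v t)) = A (w t) := by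
      rw [hF, hF, hAap, hAap, hAap, hw_def]
      exact (hleib X (u t) (v t)).symm
    rw [h3] at h2
    exact h2
  have hh : ∀ t : ℝ, HasDerivAt h 0 t := by
    intro t
    have h1 : HasDerivAt (fun s : ℝ => exp (s • (-A))) (exp (t • (-A)) * (-A)) t :=
      hasDerivAt_exp_smul_const (-A) t
    have h2 := h1.clm_apply (hw t)
    have h3 : (exp (t • (-A)) * (-A)) (w t) + exp (t • (-A)) (A (w t)) = 0 := by
      simp [ContinuousLinearMap.mul_apply]
    rw [h3] at h2
    exact h2
  have hconst : h 1 = h 0 := by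
    apply is_const_of_deriv_eq_zero
    · exact fun t => (hh t).differentiableAt
    · exact fun t => (hh t).deriv
  have h0 : h 0 = br Y Z := by
    simp [hh_def, hw_def, hu_def, hv_def]
  have h1 : h 1 = exp (-A) (br (exp A Y) (exp A Z)) := by
    simp [hh_def, hw_def, hu_def, hv_def]
  have hinv : exp A * exp (-A) = (1 : L →L[ℝ] L) := by
    let +nondep : NormedAlgebra ℚ (L →L[ℝ] L) := .restrictScalars ℚ ℝ (L →L[ℝ] L)
    rw [← exp_add_of_commute ((Commute.refl A).neg_right)]
    simp
  have key : exp (-A) (br (exp A Y) (exp A Z)) = br Y Z := by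
    rw [← h1, hconst, h0]
  calc exp A (br Y Z) = exp A (exp (-A) (br (exp A Y) (exp A Z))) := by rw [key]
    _ = (exp A * exp (-A)) (br (exp A Y) (exp A Z)) := rfl
    _ = br (exp A Y) (exp A Z) := by rw [hinv]; simp

/-- For a finite-dimensional real left Leibniz algebra, the operation
`X ▷ Y = exp(ad X)(Y)` satisfies left self-distributivity. -/
theorem leibniz_exp_self_distrib (L : Type*) [NormedAddCommGroup L]
    [NormedSpace ℝ L] [FiniteDimensional ℝ L]
    (br : L →ₗ[ℝ] L →ₗ[ℝ] L)
    (hleib : ∀ a b c : L, br a (br b c) = br (br a b) c + br b (br a c)) :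
    ∀ X Y Z : L,
      (fun X Y : L => exp ((LinearMap.toContinuousLinearMap (br X) : L →L[ℝ] L)) Y)
        X ((fun X Y : L => exp ((LinearMap.toContinuousLinearMap (br X) : L →L[ℝ] L)) Y) Y Z) =
      (fun X Y : L => exp ((LinearMap.toContinuousLinearMap (br X) : L →L[ℝ] L)) Y)
        ((fun X Y : L => exp ((LinearMap.toContinuousLinearMap (br X) : L →L[ℝ] L)) Y) X Y)
        ((fun X Y : L => exp ((LinearMap.toContinuousLinearMap (br X) : L →L[ℝ] L)) Y) X Z) := by
  intro X Y Z
  simp only []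
  set A : L →L[ℝ] L := LinearMap.toContinuousLinearMap (br X) with hA
  set B : L →L[ℝ] L := LinearMap.toContinuousLinearMap (br Y) with hB
  set A' : L →L[ℝ] L := LinearMap.toContinuousLinearMap (br (exp A Y)) with hA'
  let +nondep : NormedAlgebra ℚ (L →L[ℝ] L) := .restrictScalars ℚ ℝ (L →L[ℝ] L)
  obtain ⟨uu, huu⟩ := isUnit_exp A
  -- A' * exp A = exp A * B
  have hconj : A' * exp A = exp A * B := by
    ext Z'
    have := leibniz_exp_aut L br hleib X Y Z'
    exact this.symm
  have hA'eq : A' = ↑uu * B * ↑uu⁻¹ := by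
    have : A' * ↑uu = ↑uu * B := by rw [huu]; exact hconj
    calc A' = A' * (↑uu * ↑uu⁻¹) := by rw [uu.mul_inv]; rw [mul_one]
      _ = (A' * ↑uu) * ↑uu⁻¹ := by rw [mul_assoc]
      _ = ↑uu * B * ↑uu⁻¹ := by rw [this]
  have hexpA' : exp A' = ↑uu * exp B * ↑uu⁻¹ := by
    rw [hA'eq]; exact exp_units_conj uu B
  have : exp A' * exp A = exp A * exp B := by
    rw [hexpA', ← huu]
    calc ↑uu * exp B * ↑uu⁻¹ * ↑uu = ↑uu * exp B * (↑uu⁻¹ * ↑uu) := by rw [mul_assoc]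
      _ = ↑uu * exp B := by rw [uu.inv_mul, mul_one]
  calc exp A (exp B Z) = (exp A * exp B) Z := rfl
    _ = (exp A' * exp A) Z := by rw [this]
    _ = exp A' (exp A Z) := rfl
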